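/- Let A be a real m×n matrix, b ∈ ℝ^m, and λ > 0. Let x* be the minimum-norm least-squares solution of Ax = b, characterized by Aᵀ(Ax* - b) = 0 and x* ∈ (ker A)^⊥ (the row space of A). Suppose σ > 0 is such that ‖Ax‖ ≥ σ‖x‖ for every x in the row space of A (σ is a lower bound on the smallest nonzero singular value of A). Then the matrix AᵀA + λ²Iₙ is invertible, and the regularized solution x̃* = (AᵀA + λ²Iₙ)⁻¹Aᵀb (the x-component of the minimum-norm solution of the consistent augmented system (A λI_m)(x; y) = b) satisfies the relative error bound ‖x* - x̃*‖ ≤ ‖x*‖ / ((σ/λ)² + 1), i.e. ‖x* - x̃*‖ ≤ (λ²/(σ² + λ²))·‖x*‖. -/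

import Mathlib

open Matrix

/-- A vector in `Fin k → ℝ` regarded as an element of Euclidean space, so that `‖·‖`
is the Euclidean (2-) norm. -/
def ev {k : ℕ} (x : Fin k → ℝ) : EuclideanSpace ℝ (Fin k) := WithLp.toLp 2 x


lemma inner_ev {k : ℕ} (x y : Fin k → ℝ) : (inner ℝ (ev x) (ev y) : ℝ) = x ⬝ᵥ y := by
  simp [ev, PiLp.inner_apply, dotProduct, mul_comm]

lemma dot_self_ev {k : ℕ} (x : Fin k → ℝ) : x ⬝ᵥ x = ‖ev x‖ ^ 2 := by
  rw [← inner_ev, real_inner_self_eq_norm_sq]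

lemma quad {m n : ℕ} (A : Matrix (Fin m) (Fin n) ℝ) (lam : ℝ) (x y : Fin n → ℝ) :
    y ⬝ᵥ (Aᵀ * A + lam ^ 2 • (1 : Matrix (Fin n) (Fin n) ℝ)).mulVec x
      = (A.mulVec y) ⬝ᵥ (A.mulVec x) + lam ^ 2 * (y ⬝ᵥ x) := by
  rw [add_mulVec, smul_mulVec, one_mulVec, dotProduct_add,
    ← mulVec_mulVec, dotProduct_mulVec, vecMul_transpose, dotProduct_smul]
  rfl

lemma reg_isUnit {m n : ℕ} (A : Matrix (Fin m) (Fin n) ℝ) (lam : ℝ) (hlam : 0 < lam) :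
    IsUnit (Aᵀ * A + lam ^ 2 • (1 : Matrix (Fin n) (Fin n) ℝ)) := by
  set M := Aᵀ * A + lam ^ 2 • (1 : Matrix (Fin n) (Fin n) ℝ) with hM
  have hinj : Function.Injective (Matrix.toLin' M) := by
    rw [← LinearMap.ker_eq_bot, LinearMap.ker_eq_bot']
    intro x hx
    have hx' : M.mulVec x = 0 := hx
    have h := quad A lam x x
    rw [hx'] at h
    simp only [dotProduct_zero] at h
    have h1 : (0:ℝ) ≤ A.mulVec x ⬝ᵥ A.mulVec x := by
      rw [dot_self_ev]; positivity
    have h2 : x ⬝ᵥ x = 0 := by nlinarith [dot_self_ev x, pow_pos hlam 2]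
    have : ‖ev x‖ = 0 := by
      have := dot_self_ev x; rw [h2] at this
      nlinarith [norm_nonneg (ev x)]
    simpa [ev] using norm_eq_zero.mp this
  have hbij : Function.Bijective (Matrix.toLin' M) :=
    ⟨hinj, LinearMap.injective_iff_surjective.mp hinj⟩
  have hU : IsUnit (Matrix.toLin' M) := by
    rw [Module.End.isUnit_iff]; exact hbij
  have hU' : IsUnit (Matrix.toLinAlgEquiv' M) := by
    exact hU
  simpa using hU'.map (Matrix.toLinAlgEquiv' : Matrix (Fin n) (Fin n) ℝ ≃ₐ[ℝ] _).symm

/-- **Theorem 3, error bound.** Let `A` be a real `m×n` matrix,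
`b ∈ ℝ^m`, `λ > 0`.  Let `x*` be the minimum-norm least-squares solution of `Ax = b`,
characterized by `Aᵀ(Ax* - b) = 0` and `x* ∈ (ker A)ᗮ` (the row space of `A`).  Suppose
`σ > 0` satisfies `‖Ax‖ ≥ σ‖x‖` for every `x` in the row space of `A`.  Then
`AᵀA + λ²Iₙ` is invertible, and the regularized solution
`x̃* = (AᵀA + λ²Iₙ)⁻¹Aᵀb` satisfies
`‖x* - x̃*‖ ≤ ‖x*‖ / ((σ/λ)² + 1) = (λ²/(σ² + λ²))·‖x*‖`. -/
theorem tikhonov_relative_error_bound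
    {m n : ℕ} (A : Matrix (Fin m) (Fin n) ℝ) (b : Fin m → ℝ)
    (lam : ℝ) (hlam : 0 < lam)
    (xstar : Fin n → ℝ)
    (hnormal : Aᵀ.mulVec (A.mulVec xstar - b) = 0)
    (hrowspace : ∀ y : Fin n → ℝ, A.mulVec y = 0 → xstar ⬝ᵥ y = 0)
    (σ : ℝ) (hσ : 0 < σ)
    (hsing : ∀ x : Fin n → ℝ, (∀ y : Fin n → ℝ, A.mulVec y = 0 → x ⬝ᵥ y = 0) →
      σ * ‖ev x‖ ≤ ‖ev (A.mulVec x)‖) :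
    IsUnit (Aᵀ * A + lam ^ 2 • (1 : Matrix (Fin n) (Fin n) ℝ)) ∧
      ‖ev (xstar - (Aᵀ * A + lam ^ 2 • (1 : Matrix (Fin n) (Fin n) ℝ))⁻¹.mulVec
          (Aᵀ.mulVec b))‖
        ≤ (lam ^ 2 / (σ ^ 2 + lam ^ 2)) * ‖ev xstar‖ := by
  set M := Aᵀ * A + lam ^ 2 • (1 : Matrix (Fin n) (Fin n) ℝ) with hMdef
  have hU : IsUnit M := reg_isUnit A lam hlam
  refine ⟨hU, ?_⟩
  have hdet : IsUnit M.det := (Matrix.isUnit_iff_isUnit_det M).mp hU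
  have hMinv : M * M⁻¹ = 1 := Matrix.mul_nonsing_inv M hdet
  have hMvec : ∀ v, M.mulVec (M⁻¹.mulVec v) = v := by
    intro v; rw [mulVec_mulVec, hMinv, one_mulVec]
  set w := xstar - M⁻¹.mulVec (Aᵀ.mulVec b) with hw
  -- Aᵀ b = AᵀA x*
  have hAb : Aᵀ.mulVec b = (Aᵀ * A).mulVec xstar := by
    have := hnormal
    rw [mulVec_sub, sub_eq_zero] at this
    rw [← this, mulVec_mulVec]
  -- M w = λ² x*
  have hMw : M.mulVec w = lam ^ 2 • xstar := by
    rw [hw, mulVec_sub, hMvec, hAb, hMdef, add_mulVec, smul_mulVec, one_mulVec]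
    abel
  -- w is in the row space
  have hwrow : ∀ y : Fin n → ℝ, A.mulVec y = 0 → w ⬝ᵥ y = 0 := by
    intro y hy
    have h1 := quad A lam w y
    rw [hMw] at h1
    have h2 : y ⬝ᵥ (lam ^ 2 • xstar) = lam ^ 2 * (xstar ⬝ᵥ y) := by
      rw [dotProduct_smul, dotProduct_comm]; rfl
    rw [h2, hrowspace y hy, hy, zero_dotProduct, zero_add] at h1
    have : y ⬝ᵥ w = 0 := by
      simp only [mul_zero] at h1
      rcases mul_eq_zero.mp h1.symm with h | h
      · exact absurd h (pow_pos hlam 2).ne'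
      · exact h
    rwa [dotProduct_comm] at this
  have hsw := hsing w hwrow
  -- quadratic identity for w
  have hq := quad A lam w w
  rw [hMw] at hq
  have hqL : w ⬝ᵥ (lam ^ 2 • xstar) = lam ^ 2 * (inner ℝ (ev w) (ev xstar) : ℝ) := by
    rw [inner_ev, dotProduct_smul]; rfl
  rw [hqL, dot_self_ev, dot_self_ev] at hq
  have hCS : (inner ℝ (ev w) (ev xstar) : ℝ) ≤ ‖ev w‖ * ‖ev xstar‖ := real_inner_le_norm _ _
  have hAw2 : σ ^ 2 * ‖ev w‖ ^ 2 ≤ ‖ev (A.mulVec w)‖ ^ 2 := by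
    have h0 : 0 ≤ σ * ‖ev w‖ := mul_nonneg hσ.le (norm_nonneg _)
    nlinarith [hsw]
  have hkey : (σ ^ 2 + lam ^ 2) * ‖ev w‖ ^ 2 ≤ lam ^ 2 * (‖ev w‖ * ‖ev xstar‖) := by
    nlinarith [pow_pos hlam 2]
  have hpos : (0:ℝ) < σ ^ 2 + lam ^ 2 := by positivity
  rw [div_mul_eq_mul_div, le_div_iff₀ hpos]
  rcases eq_or_lt_of_le (norm_nonneg (ev w)) with h0 | h0
  · rw [← h0]
    have : (0:ℝ) ≤ lam ^ 2 * ‖ev xstar‖ := by positivity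
    linarith
  · nlinarith [hkey]
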